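/- Let φ_1, ..., φ_n be unit norm vectors in ℂ^d with d ≥ 1, and let P = {w ∈ ℝ^n : w_i ≥ 0 for all i, and Σ_{i=1}^n w_i φ_iφ_i* = (1/d)·I_d}. Then P is a compact convex subset of ℝ^n and P equals the convex hull of the set M of its elements w for which no proper subset of {φ_i : w_i > 0} is scalable; in particular every element of P is a convex combination of such minimal elements. -/

import Mathlib

/-- The outer product `x x*` of a vector `x ∈ ℂ^d` with itself:
the `d × d` matrix whose `(j,k)` entry is `x j * conj (x k)`. -/
def outer {d : ℕ} (x : EuclideanSpace ℂ (Fin d)) : Matrix (Fin d) (Fin d) ℂ :=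
  Matrix.of fun j k => x j * starRingEnd ℂ (x k)

lemma trace_outer {d : ℕ} (x : EuclideanSpace ℂ (Fin d)) (hx : ‖x‖ = 1) :
    Matrix.trace (outer x) = 1 := by
  have h : ∑ i, ‖x i‖ ^ 2 = 1 := by
    have := EuclideanSpace.norm_eq x
    rw [hx] at this
    have h0 : 0 ≤ ∑ i, ‖x i‖ ^ 2 := Finset.sum_nonneg fun i _ => sq_nonneg _
    nlinarith [Real.sq_sqrt h0, this]
  simp only [outer, Matrix.trace, Matrix.diag, Matrix.of_apply, Complex.mul_conj]
  rw [← Complex.ofReal_sum]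
  norm_cast
  simpa [Complex.normSq_eq_norm_sq] using h

lemma sum_w {d n : ℕ} (hd : 1 ≤ d) {φ : Fin n → EuclideanSpace ℂ (Fin d)}
    (hφ : ∀ i, ‖φ i‖ = 1) {w : Fin n → ℝ}
    (hw : ∑ i, w i • outer (φ i) = (d : ℝ)⁻¹ • (1 : Matrix (Fin d) (Fin d) ℂ)) :
    ∑ i, w i = 1 := by
  have ht := congrArg Matrix.trace hw
  rw [Matrix.trace_sum, Matrix.trace_smul, Matrix.trace_one] at ht
  simp only [Matrix.trace_smul, trace_outer _ (hφ _)] at ht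
  have hd' : (d : ℝ) ≠ 0 := by positivity
  have : ((∑ i, w i : ℝ) : ℂ) = 1 := by
    rw [Complex.ofReal_sum]
    rw [show (Fintype.card (Fin d) : ℂ) = ((d : ℝ) : ℂ) by norm_num] at ht
    calc ∑ i, ((w i : ℝ) : ℂ) = ∑ i, w i • (1 : ℂ) := by
          simp [Complex.real_smul]
      _ = (d : ℝ)⁻¹ • ((d : ℝ) : ℂ) := ht
      _ = 1 := by
          rw [Complex.real_smul]
          norm_cast
          field_simp
  exact_mod_cast this

section main

variable {d n : ℕ}

def Pcond (d n : ℕ) (φ : Fin n → EuclideanSpace ℂ (Fin d)) (w : Fin n → ℝ) : Prop :=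
  (∀ i, 0 ≤ w i) ∧
    ∑ i, w i • outer (φ i) = (d : ℝ)⁻¹ • (1 : Matrix (Fin d) (Fin d) ℂ)

lemma convexP (φ : Fin n → EuclideanSpace ℂ (Fin d)) :
    Convex ℝ {w : Fin n → ℝ | Pcond d n φ w} := by
  rintro w ⟨hw1, hw2⟩ u ⟨hu1, hu2⟩ a b ha hb hab
  constructor
  · intro i2
    simp only [Pi.add_apply, Pi.smul_apply, smul_eq_mul]
    have h1 := hw1 i2
    have h2 := hu1 i2
    positivity
  have : ∑ i, (a • w + b • u) i • outer (φ i)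
      = a • ∑ i, w i • outer (φ i) + b • ∑ i, u i • outer (φ i) := by
    rw [Finset.smul_sum, Finset.smul_sum, ← Finset.sum_add_distrib]
    refine Finset.sum_congr rfl fun i _ => ?_
    simp only [Pi.add_apply, Pi.smul_apply, smul_eq_mul, add_smul, mul_smul]
  rw [this, hw2, hu2, ← add_smul, hab, one_smul]

lemma mainlemma (hd : 1 ≤ d) (φ : Fin n → EuclideanSpace ℂ (Fin d))
    (hφ : ∀ i, ‖φ i‖ = 1) :
    ∀ k : ℕ, ∀ w : Fin n → ℝ, Pcond d n φ w →
      (Finset.univ.filter fun i => 0 < w i).card ≤ k →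
      w ∈ convexHull ℝ {w : Fin n → ℝ | Pcond d n φ w ∧
        ∀ I : Finset (Fin n), (I : Set (Fin n)) ⊂ {i | 0 < w i} →
          ¬ ∃ v : Fin n → ℝ, (∀ i, 0 ≤ v i) ∧
              ∑ i ∈ I, v i • outer (φ i) = (1 : Matrix (Fin d) (Fin d) ℂ)} := by
  intro k
  induction k with
  | zero =>
    intro w hw hcard
    by_cases hmin : ∀ I : Finset (Fin n), (I : Set (Fin n)) ⊂ {i | 0 < w i} →
        ¬ ∃ v : Fin n → ℝ, (∀ i, 0 ≤ v i) ∧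
            ∑ i ∈ I, v i • outer (φ i) = (1 : Matrix (Fin d) (Fin d) ℂ)
    · exact subset_convexHull ℝ _ ⟨hw, hmin⟩
    · push_neg at hmin
      obtain ⟨I, hI, -⟩ := hmin
      obtain ⟨j, hj, -⟩ := Set.exists_of_ssubset hI
      exfalso
      have hjm : j ∈ Finset.univ.filter fun i => 0 < w i := by
        simp only [Finset.mem_filter, Finset.mem_univ, true_and]
        exact hj
      have := Finset.card_pos.2 ⟨j, hjm⟩
      omega
  | succ k ih =>
    intro w hw hcard
    by_cases hmin : ∀ I : Finset (Fin n), (I : Set (Fin n)) ⊂ {i | 0 < w i} →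
        ¬ ∃ v : Fin n → ℝ, (∀ i, 0 ≤ v i) ∧
            ∑ i ∈ I, v i • outer (φ i) = (1 : Matrix (Fin d) (Fin d) ℂ)
    · exact subset_convexHull ℝ _ ⟨hw, hmin⟩
    push_neg at hmin
    obtain ⟨I, hI, v, hv0, hveq⟩ := hmin
    have hIsub : ∀ i ∈ I, 0 < w i := fun i hi => hI.1 hi
    -- the scaled witness u ∈ P, supported in I
    set u : Fin n → ℝ := fun i => if i ∈ I then v i / d else 0 with hu_def
    have hd' : (0 : ℝ) < d := by exact_mod_cast hd
    have hu0 : ∀ i, 0 ≤ u i := by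
      intro i
      simp only [hu_def]
      split
      · exact div_nonneg (hv0 i) hd'.le
      · exact le_refl 0
    have huI : ∀ i, i ∉ I → u i = 0 := by
      intro i hi; simp [hu_def, hi]
    have hueq : ∑ i, u i • outer (φ i) = (d : ℝ)⁻¹ • (1 : Matrix (Fin d) (Fin d) ℂ) := by
      have h1 : ∑ i, u i • outer (φ i) = ∑ i ∈ I, (d : ℝ)⁻¹ • (v i • outer (φ i)) := by
        rw [← Finset.univ_inter I, ← Finset.sum_ite_mem Finset.univ I]
        refine Finset.sum_congr rfl fun i _ => ?_
        by_cases hi : i ∈ I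
        · simp [hu_def, hi, div_eq_inv_mul, mul_smul]
        · simp [hu_def, hi]
      rw [h1, ← Finset.smul_sum, hveq]
    have hu : Pcond d n φ u := ⟨hu0, hueq⟩
    -- sums are 1
    have hsw : ∑ i, w i = 1 := sum_w hd hφ hw.2
    have hsu : ∑ i, u i = 1 := sum_w hd hφ hueq
    -- there is an index where u exceeds w
    have hex : ∃ i, w i < u i := by
      by_contra h
      push_neg at h
      obtain ⟨j, hj, hjI⟩ := Set.exists_of_ssubset hI
      have hjw : 0 < w j := hj
      have heq : ∀ i ∈ Finset.univ, u i = w i :=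
        (Finset.sum_eq_sum_iff_of_le (fun i _ => h i)).1 (by rw [hsu, hsw])
      have heq2 := heq j (Finset.mem_univ j)
      rw [huI j hjI] at heq2
      exact hjw.ne' heq2.symm
    set T : Finset (Fin n) := Finset.univ.filter fun i => w i < u i with hT_def
    have hTne : T.Nonempty := by
      obtain ⟨i, hi⟩ := hex
      exact ⟨i, by simp [hT_def, hi]⟩
    have hTprop : ∀ i ∈ T, w i < u i := by
      intro i hi; simpa [hT_def] using hi
    have hTpos : ∀ i ∈ T, 0 < w i := by
      intro i hi
      have h1 := hTprop i hi
      have h2 : 0 < u i := lt_of_le_of_lt (hw.1 i) h1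
      have h3 : i ∈ I := by
        by_contra hc; rw [huI i hc] at h2; exact lt_irrefl 0 h2
      exact hIsub i h3
    obtain ⟨j, hjT, hjt⟩ := T.exists_mem_eq_inf' hTne fun i => w i / (u i - w i)
    obtain ⟨t, ht_def⟩ : ∃ t : ℝ, t = w j / (u j - w j) := ⟨_, rfl⟩
    have htle : ∀ i ∈ T, t ≤ w i / (u i - w i) := by
      intro i hi
      rw [ht_def, ← hjt]
      exact Finset.inf'_le _ hi
    have htpos : 0 < t := by
      rw [ht_def]
      exact div_pos (hTpos j hjT) (sub_pos.2 (hTprop j hjT))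
    -- define w'
    obtain ⟨w', hw'_def⟩ : ∃ w' : Fin n → ℝ, w' = fun i => (1 + t) * w i - t * u i :=
      ⟨_, rfl⟩
    have hw'app : ∀ i, w' i = (1 + t) * w i - t * u i := fun i => by rw [hw'_def]
    have hw'0 : ∀ i, 0 ≤ w' i := by
      intro i
      rw [hw'app]
      by_cases hi : i ∈ T
      · have hlt := hTprop i hi
        have hle : t ≤ w i / (u i - w i) := htle i hi
        rw [le_div_iff₀ (sub_pos.2 hlt)] at hle
        nlinarith
      · have : u i ≤ w i := by
          by_contra hc; push_neg at hc
          exact hi (by simp [hT_def, hc])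
        nlinarith [hw.1 i, htpos.le]
    have hw'eq : ∑ i, w' i • outer (φ i)
        = (d : ℝ)⁻¹ • (1 : Matrix (Fin d) (Fin d) ℂ) := by
      have h1 : ∑ i, w' i • outer (φ i)
          = (1 + t) • ∑ i, w i • outer (φ i) - t • ∑ i, u i • outer (φ i) := by
        rw [Finset.smul_sum, Finset.smul_sum, ← Finset.sum_sub_distrib]
        refine Finset.sum_congr rfl fun i _ => ?_
        rw [hw'app, sub_smul, mul_smul, mul_smul]
      rw [h1, hw.2, hueq, ← sub_smul]
      norm_num
    have hw' : Pcond d n φ w' := ⟨hw'0, hw'eq⟩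
    -- supports
    have hsupp_u : (Finset.univ.filter fun i => 0 < u i) ⊆ I := by
      intro i hi
      simp only [Finset.mem_filter, Finset.mem_univ, true_and] at hi
      by_contra hc
      rw [huI i hc] at hi
      exact lt_irrefl 0 hi
    have hsuppw : I ⊂ Finset.univ.filter fun i => 0 < w i := by
      constructor
      · intro i hi
        simp only [Finset.mem_filter, Finset.mem_univ, true_and]
        exact hIsub i hi
      · intro hc
        obtain ⟨j', hj', hj'I⟩ := Set.exists_of_ssubset hI
        have : j' ∈ I := hc (by simp only [Finset.mem_filter, Finset.mem_univ, true_and]; exact hj')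
        exact hj'I this
    have hcard_u : (Finset.univ.filter fun i => 0 < u i).card ≤ k := by
      have h1 := Finset.card_le_card hsupp_u
      have h2 := Finset.card_lt_card hsuppw
      omega
    have hsupp_w' : (Finset.univ.filter fun i => 0 < w' i)
        ⊂ Finset.univ.filter fun i => 0 < w i := by
      constructor
      · intro i hi
        simp only [Finset.mem_filter, Finset.mem_univ, true_and] at hi ⊢
        by_contra hc
        push_neg at hc
        have hwi : w i = 0 := le_antisymm hc (hw.1 i)
        have hui : u i = 0 := by
          by_contra hc2
          have hpos : 0 < u i := lt_of_le_of_ne (hu0 i) (Ne.symm hc2)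
          have hiI : i ∈ I := by
            by_contra hc3; rw [huI i hc3] at hpos; exact lt_irrefl 0 hpos
          exact absurd hwi (hIsub i hiI).ne'
        rw [hw'app, hwi, hui] at hi
        norm_num at hi
      · intro hc
        -- j (the minimizer) has w j > 0 but w' j = 0
        have hjw : 0 < w j := hTpos j hjT
        have hjmem : j ∈ Finset.univ.filter fun i => 0 < w i := by
          simp only [Finset.mem_filter, Finset.mem_univ, true_and]; exact hjw
        have hj' := hc hjmem
        simp only [Finset.mem_filter, Finset.mem_univ, true_and] at hj'
        have hne : u j - w j ≠ 0 := (sub_pos.2 (hTprop j hjT)).ne'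
        have hz : w' j = 0 := by
          rw [hw'app, ht_def]
          field_simp
          ring
        rw [hz] at hj'
        exact lt_irrefl 0 hj'
    have hcard_w' : (Finset.univ.filter fun i => 0 < w' i).card ≤ k := by
      have h2 := Finset.card_lt_card hsupp_w'
      omega
    -- w is a convex combination of w' and u
    have hcomb : w = (1 / (1 + t)) • w' + (t / (1 + t)) • u := by
      funext i
      have h1t : (1 : ℝ) + t ≠ 0 := by positivity
      simp only [Pi.add_apply, Pi.smul_apply, smul_eq_mul]
      rw [hw'app]
      field_simp
      ring
    have hmem_w' := ih w' hw' hcard_w'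
    have hmem_u := ih u hu hcard_u
    rw [hcomb]
    have h1t : (0 : ℝ) < 1 + t := by positivity
    refine (convex_convexHull ℝ _) hmem_w' hmem_u ?_ ?_ ?_
    · positivity
    · positivity
    · field_simp

end main

/-- Let `P = {w ∈ ℝ^n : w ≥ 0, Σ w_i φ_i φ_i* = (1/d) I_d}` for unit norm vectors
`φ_i ∈ ℂ^d`.  Then `P` is a compact convex subset of `ℝ^n`, and `P` is the convex hull
of the set of its minimal elements, i.e. those `w ∈ P` for which no proper subset of
`{φ_i : w_i > 0}` is scalable. -/
theorem stmt12 {d n : ℕ} (hd : 1 ≤ d) (φ : Fin n → EuclideanSpace ℂ (Fin d))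
    (hφ : ∀ i, ‖φ i‖ = 1) :
    IsCompact {w : Fin n → ℝ | (∀ i, 0 ≤ w i) ∧
        ∑ i, w i • outer (φ i) = (d : ℝ)⁻¹ • (1 : Matrix (Fin d) (Fin d) ℂ)} ∧
    Convex ℝ {w : Fin n → ℝ | (∀ i, 0 ≤ w i) ∧
        ∑ i, w i • outer (φ i) = (d : ℝ)⁻¹ • (1 : Matrix (Fin d) (Fin d) ℂ)} ∧
    {w : Fin n → ℝ | (∀ i, 0 ≤ w i) ∧
        ∑ i, w i • outer (φ i) = (d : ℝ)⁻¹ • (1 : Matrix (Fin d) (Fin d) ℂ)} =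
      convexHull ℝ
        {w : Fin n → ℝ |
          ((∀ i, 0 ≤ w i) ∧
            ∑ i, w i • outer (φ i) = (d : ℝ)⁻¹ • (1 : Matrix (Fin d) (Fin d) ℂ)) ∧
          ∀ I : Finset (Fin n), (I : Set (Fin n)) ⊂ {i | 0 < w i} →
            ¬ ∃ v : Fin n → ℝ, (∀ i, 0 ≤ v i) ∧
                ∑ i ∈ I, v i • outer (φ i) = (1 : Matrix (Fin d) (Fin d) ℂ)} := by
  have hPset : {w : Fin n → ℝ | (∀ i, 0 ≤ w i) ∧
      ∑ i, w i • outer (φ i) = (d : ℝ)⁻¹ • (1 : Matrix (Fin d) (Fin d) ℂ)}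
      = {w : Fin n → ℝ | Pcond d n φ w} := rfl
  have hconv : Convex ℝ {w : Fin n → ℝ | Pcond d n φ w} := convexP φ
  have hclosed : IsClosed {w : Fin n → ℝ | Pcond d n φ w} := by
    have h1 : IsClosed {w : Fin n → ℝ | ∀ i, 0 ≤ w i} := by
      have : {w : Fin n → ℝ | ∀ i, 0 ≤ w i} = ⋂ i, {w : Fin n → ℝ | 0 ≤ w i} := by
        ext w; simp
      rw [this]
      exact isClosed_iInter fun i => isClosed_le continuous_const (continuous_apply i)
    have h2 : IsClosed {w : Fin n → ℝ |
        ∑ i, w i • outer (φ i) = (d : ℝ)⁻¹ • (1 : Matrix (Fin d) (Fin d) ℂ)} := by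
      have hcont : Continuous fun w : Fin n → ℝ => ∑ i, w i • outer (φ i) :=
        continuous_finset_sum _ fun i _ => (continuous_apply i).smul continuous_const
      exact isClosed_eq hcont continuous_const
    exact h1.inter h2
  have hbdd : {w : Fin n → ℝ | Pcond d n φ w} ⊆ Metric.closedBall 0 1 := by
    intro w hw
    rw [Metric.mem_closedBall, dist_zero_right]
    have hsw : ∑ i, w i = 1 := sum_w hd hφ hw.2
    rw [pi_norm_le_iff_of_nonneg zero_le_one]
    intro i
    rw [Real.norm_eq_abs, abs_of_nonneg (hw.1 i)]
    calc w i ≤ ∑ j, w j := Finset.single_le_sum (fun j _ => hw.1 j) (Finset.mem_univ i)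
      _ = 1 := hsw
  have hcomp : IsCompact {w : Fin n → ℝ | Pcond d n φ w} :=
    (isCompact_closedBall 0 1).of_isClosed_subset hclosed hbdd
  refine ⟨hcomp, hconv, ?_⟩
  apply Set.Subset.antisymm
  · intro w hw
    exact mainlemma hd φ hφ n w hw
      (le_trans (Finset.card_le_univ _) (by simp))
  · exact convexHull_min (fun w hw => hw.1) hconv
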